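/- Let H = [[H11,H12],[H12^T,H22]] be a real symmetric (n+r)×(n+r) matrix with H22 ≺ 0. Then the set S_H = { Z ∈ R^{r×n} : [I;Z]^T H [I;Z] ⪰ 0 } is bounded (with respect to any matrix norm on R^{r×n}). -/

import Mathlib

open Matrix

/-- Symmetry of the bilinear form of a real Hermitian matrix. -/
lemma dot_symm {r : ℕ} {N : Matrix (Fin r) (Fin r) ℝ} (hN : N.IsHermitian)
    (u v : Fin r → ℝ) : u ⬝ᵥ N *ᵥ v = v ⬝ᵥ N *ᵥ u := by
  have hNt : Nᵀ = N := by
    have h := hN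
    rw [Matrix.IsHermitian] at h
    simpa [Matrix.conjTranspose_eq_transpose_of_trivial] using h
  rw [Matrix.dotProduct_mulVec, ← Matrix.mulVec_transpose, hNt, dotProduct_comm]

/-- Cauchy–Schwarz for positive semidefinite real matrices. -/
lemma cs_aux {r : ℕ} {N : Matrix (Fin r) (Fin r) ℝ} (hN : N.PosSemidef)
    (x y : Fin r → ℝ) : (x ⬝ᵥ N *ᵥ y) ^ 2 ≤ (x ⬝ᵥ N *ᵥ x) * (y ⬝ᵥ N *ᵥ y) := by
  have hsym := dot_symm hN.1
  have hform : ∀ t : ℝ,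
      0 ≤ (y ⬝ᵥ N *ᵥ y) * (t * t) + (2 * (x ⬝ᵥ N *ᵥ y)) * t + (x ⬝ᵥ N *ᵥ x) := by
    intro t
    have h0 := hN.dotProduct_mulVec_nonneg (x + t • y)
    have hstar : star (x + t • y) = x + t • y := by simp
    rw [hstar] at h0
    have hexp : (x + t • y) ⬝ᵥ N *ᵥ (x + t • y)
        = (y ⬝ᵥ N *ᵥ y) * (t * t) + (2 * (x ⬝ᵥ N *ᵥ y)) * t + (x ⬝ᵥ N *ᵥ x) := by
      rw [Matrix.mulVec_add, Matrix.mulVec_smul]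
      simp only [add_dotProduct, dotProduct_add, smul_dotProduct,
        dotProduct_smul, smul_eq_mul]
      rw [hsym y x]
      ring
    rw [hexp] at h0
    linarith
  have hd := discrim_le_zero hform
  rw [discrim] at hd
  nlinarith [hd]

/-- Key bounding lemma: if `N ≻ 0` then `{z : zᵀ N z ≤ c₀ + 2 b·z}` is
entrywise bounded. -/
lemma key_bound {r : ℕ} {N : Matrix (Fin r) (Fin r) ℝ} (hN : N.PosDef)
    (b : Fin r → ℝ) (c0 : ℝ) :
    ∃ K : ℝ, 0 ≤ K ∧ ∀ z : Fin r → ℝ,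
      z ⬝ᵥ N *ᵥ z ≤ c0 + 2 * (b ⬝ᵥ z) → ∀ i, |z i| ≤ K := by
  have hNsd := hN.posSemidef
  have hsym := dot_symm hN.1
  have hq : ∀ w : Fin r → ℝ, 0 ≤ w ⬝ᵥ N *ᵥ w := fun w => by simpa using hNsd.dotProduct_mulVec_nonneg w
  have hNdet : IsUnit N.det := isUnit_iff_ne_zero.mpr hN.det_pos.ne'
  have hinv : N * N⁻¹ = 1 := Matrix.mul_nonsing_inv N hNdet
  set u : Fin r → ℝ := N⁻¹ *ᵥ b with hu
  have hNu : N *ᵥ u = b := by rw [hu, Matrix.mulVec_mulVec, hinv, Matrix.one_mulVec]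
  set B : ℝ := u ⬝ᵥ N *ᵥ u with hB
  have hB0 : 0 ≤ B := hq u
  set v : Fin r → Fin r → ℝ := fun i => N⁻¹ *ᵥ Pi.single i 1 with hv
  have hNv : ∀ i, N *ᵥ v i = Pi.single i 1 := fun i => by
    rw [hv, Matrix.mulVec_mulVec, hinv, Matrix.one_mulVec]
  set T : ℝ := Real.sqrt B + Real.sqrt (B + c0) with hT
  have hT0 : 0 ≤ T := add_nonneg (Real.sqrt_nonneg _) (Real.sqrt_nonneg _)
  refine ⟨(∑ i, Real.sqrt (v i ⬝ᵥ N *ᵥ v i)) * T,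
    mul_nonneg (Finset.sum_nonneg fun i _ => Real.sqrt_nonneg _) hT0, ?_⟩
  intro z hz i
  set Q : ℝ := z ⬝ᵥ N *ᵥ z with hQ
  have hQ0 : 0 ≤ Q := hq z
  -- bound b ⬝ᵥ z
  have hbz : b ⬝ᵥ z = u ⬝ᵥ N *ᵥ z := by
    rw [dotProduct_comm, ← hNu, hsym z u]
  have hcs1 : (b ⬝ᵥ z) ^ 2 ≤ B * Q := by rw [hbz]; exact cs_aux hNsd u z
  have hbz' : b ⬝ᵥ z ≤ Real.sqrt B * Real.sqrt Q := by
    have hs : (Real.sqrt B * Real.sqrt Q) ^ 2 = B * Q := by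
      rw [mul_pow, Real.sq_sqrt hB0, Real.sq_sqrt hQ0]
    nlinarith [mul_nonneg (Real.sqrt_nonneg B) (Real.sqrt_nonneg Q)]
  -- solve the quadratic inequality for t = sqrt Q
  set t : ℝ := Real.sqrt Q with ht
  have ht2 : t ^ 2 = Q := Real.sq_sqrt hQ0
  have ht0 : 0 ≤ t := Real.sqrt_nonneg _
  have hsB : Real.sqrt B ^ 2 = B := Real.sq_sqrt hB0
  have hquad : (t - Real.sqrt B) ^ 2 ≤ B + c0 := by nlinarith
  have htT : t ≤ T := by
    have h1 : t - Real.sqrt B ≤ Real.sqrt (B + c0) := by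
      calc t - Real.sqrt B ≤ |t - Real.sqrt B| := le_abs_self _
        _ = Real.sqrt ((t - Real.sqrt B) ^ 2) := (Real.sqrt_sq_eq_abs _).symm
        _ ≤ Real.sqrt (B + c0) := Real.sqrt_le_sqrt hquad
    rw [hT]; linarith
  have hQT : Q ≤ T ^ 2 := by nlinarith
  -- bound z i
  have hzi : z i = v i ⬝ᵥ N *ᵥ z := by
    rw [← hsym z (v i), hNv i, dotProduct_single, mul_one]
  have hcs2 : (z i) ^ 2 ≤ (v i ⬝ᵥ N *ᵥ v i) * Q := by rw [hzi]; exact cs_aux hNsd (v i) z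
  have hdi0 : 0 ≤ v i ⬝ᵥ N *ᵥ v i := hq (v i)
  have h1 : |z i| ≤ Real.sqrt (v i ⬝ᵥ N *ᵥ v i) * T := by
    have h2 : (z i) ^ 2 ≤ (v i ⬝ᵥ N *ᵥ v i) * T ^ 2 := by
      calc (z i) ^ 2 ≤ (v i ⬝ᵥ N *ᵥ v i) * Q := hcs2
        _ ≤ (v i ⬝ᵥ N *ᵥ v i) * T ^ 2 := by
            exact mul_le_mul_of_nonneg_left hQT hdi0
    calc |z i| = Real.sqrt ((z i) ^ 2) := (Real.sqrt_sq_eq_abs _).symm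
      _ ≤ Real.sqrt ((v i ⬝ᵥ N *ᵥ v i) * T ^ 2) := Real.sqrt_le_sqrt h2
      _ = Real.sqrt (v i ⬝ᵥ N *ᵥ v i) * T := by
          rw [Real.sqrt_mul hdi0, Real.sqrt_sq hT0]
  refine h1.trans (mul_le_mul_of_nonneg_right ?_ hT0)
  exact Finset.single_le_sum (f := fun i => Real.sqrt (v i ⬝ᵥ N *ᵥ v i))
    (fun i _ => Real.sqrt_nonneg _) (Finset.mem_univ i)

/-- With `H22 ≺ 0`, the set `S_H` is bounded (entrywise, hence in any
matrix norm). -/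
theorem SH_bounded
    (n r : ℕ)
    (H11 : Matrix (Fin n) (Fin n) ℝ) (H12 : Matrix (Fin n) (Fin r) ℝ)
    (H22 : Matrix (Fin r) (Fin r) ℝ)
    (hH11 : H11.IsSymm) (hH22 : H22.IsSymm)
    (H : Matrix (Fin n ⊕ Fin r) (Fin n ⊕ Fin r) ℝ)
    (hH : H = fromBlocks H11 H12 H12ᵀ H22)
    (hH22neg : (-H22).PosDef) :
    ∃ c : ℝ, ∀ Z : Matrix (Fin r) (Fin n) ℝ,
      ((fromRows (1 : Matrix (Fin n) (Fin n) ℝ) Z)ᵀ * H *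
        fromRows 1 Z).PosSemidef →
      ∀ i j, |Z i j| ≤ c := by
  set b : Fin n → Fin r → ℝ := fun j => H12ᵀ *ᵥ Pi.single j 1 with hb
  set c0 : Fin n → ℝ := fun j => Pi.single j 1 ⬝ᵥ H11 *ᵥ Pi.single j 1 with hc0
  choose K hK0 hK using fun j => key_bound hH22neg (b j) (c0 j)
  refine ⟨∑ j, K j, ?_⟩
  intro Z hPSD i j
  set x : Fin n → ℝ := Pi.single j 1 with hx
  set z : Fin r → ℝ := Z *ᵥ x with hz
  have h0 := hPSD.dotProduct_mulVec_nonneg x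
  have hstar : star x = x := by simp
  rw [hstar] at h0
  have hAx : fromRows (1 : Matrix (Fin n) (Fin n) ℝ) Z *ᵥ x = Sum.elim x z := by
    rw [fromRows_mulVec, Matrix.one_mulVec]
  have hform : x ⬝ᵥ ((fromRows (1 : Matrix (Fin n) (Fin n) ℝ) Z)ᵀ * H *
      fromRows (1 : Matrix (Fin n) (Fin n) ℝ) Z) *ᵥ x
      = c0 j + (b j ⬝ᵥ z + b j ⬝ᵥ z) - z ⬝ᵥ (-H22) *ᵥ z := by
    rw [← Matrix.mulVec_mulVec, ← Matrix.mulVec_mulVec,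
      Matrix.dotProduct_mulVec x ((fromRows (1 : Matrix (Fin n) (Fin n) ℝ) Z)ᵀ),
      Matrix.vecMul_transpose, hAx, hH, Matrix.fromBlocks_mulVec,
      sumElim_dotProduct_sumElim]
    have h1 : x ⬝ᵥ H12 *ᵥ z = b j ⬝ᵥ z := by
      rw [Matrix.dotProduct_mulVec, ← Matrix.mulVec_transpose]
    have h2 : z ⬝ᵥ H12ᵀ *ᵥ x = b j ⬝ᵥ z := by
      rw [dotProduct_comm]
    have h3 : z ⬝ᵥ (-H22) *ᵥ z = -(z ⬝ᵥ H22 *ᵥ z) := by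
      rw [Matrix.neg_mulVec, dotProduct_neg]
    simp only [dotProduct_add, Sum.elim_comp_inl, Sum.elim_comp_inr]
    rw [h1, h2, h3]
    simp only [hc0]
    ring
  erw [hform] at h0
  have hzineq : z ⬝ᵥ (-H22) *ᵥ z ≤ c0 j + 2 * (b j ⬝ᵥ z) := by linarith
  have hzi := hK j z hzineq i
  have hzval : z i = Z i j := by
    simp [hz, hx, Matrix.mulVec_single]
  rw [hzval] at hzi
  exact hzi.trans (Finset.single_le_sum (f := K) (fun j' _ => hK0 j') (Finset.mem_univ j))
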